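/- In a conilpotent Lie bialgebra g with canonical filtration g_k, the bracket satisfies [g_i, g_j] ⊆ g_{i+j-1}. -/

import Mathlib

/- Iterated cobracket machinery: `Tpow K V n` is the (n+1)-fold tensor power of `V`,
`iterCo δ n` is the n-fold iterated cobracket `δ^n = (δ ⊗ id^{⊗(n-1)}) ∘ δ^{n-1}`. -/

open TensorProduct

variable (K : Type) [Field K] (V : Type) [AddCommGroup V] [Module K V]

noncomputable def Tpow : ℕ → ModuleCat K
  | 0 => ModuleCat.of K V
  | n + 1 => ModuleCat.of K (V ⊗[K] Tpow n)

variable {K V}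

noncomputable def applyFirst (δ : V →ₗ[K] V ⊗[K] V) : (n : ℕ) → (Tpow K V n →ₗ[K] Tpow K V (n + 1))
  | 0 => δ
  | n + 1 =>
    show (V ⊗[K] Tpow K V n) →ₗ[K] (V ⊗[K] (V ⊗[K] Tpow K V n)) from
      (TensorProduct.assoc K V V (Tpow K V n)).toLinearMap.comp
        (TensorProduct.map δ LinearMap.id)

/-- `iterCo δ n = δ^n`, with `δ^0 = id` and `δ^1 = δ`. -/
noncomputable def iterCo (δ : V →ₗ[K] V ⊗[K] V) : (n : ℕ) → (V →ₗ[K] Tpow K V n)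
  | 0 => show V →ₗ[K] V from LinearMap.id
  | n + 1 => (applyFirst δ n).comp (iterCo δ n)

/-- Signed cyclic permutation `x ⊗ (y ⊗ z) ↦ z ⊗ (x ⊗ y)` on the triple tensor power
(3-cycles have sign +1). -/
noncomputable def cyc3 : (V ⊗[K] (V ⊗[K] V)) ≃ₗ[K] (V ⊗[K] (V ⊗[K] V)) :=
  (TensorProduct.assoc K V V V).symm.trans (TensorProduct.comm K (V ⊗[K] V) V)

/-- `(δ ⊗ id) ∘ δ : V → V ⊗ (V ⊗ V)` (after reassociating). -/
noncomputable def coJacMap (δ : V →ₗ[K] V ⊗[K] V) : V →ₗ[K] (V ⊗[K] (V ⊗[K] V)) :=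
  (TensorProduct.assoc K V V V).toLinearMap ∘ₗ (TensorProduct.map δ LinearMap.id) ∘ₗ δ

/-- Adjoint action of `a` on `V ⊗ V`: `a · (x ⊗ y) = [a,x] ⊗ y + x ⊗ [a,y]`. -/
noncomputable def adAct (B : V →ₗ[K] V →ₗ[K] V) (a : V) : (V ⊗[K] V) →ₗ[K] (V ⊗[K] V) :=
  TensorProduct.map (B a) LinearMap.id + TensorProduct.map LinearMap.id (B a)

noncomputable def eAux : (n : ℕ) → ((Tpow K V n) ⊗[K] V ≃ₗ[K] Tpow K V (n+1))
  | 0 => LinearEquiv.refl K (V ⊗[K] V)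
  | n + 1 =>
    show ((V ⊗[K] Tpow K V n) ⊗[K] V) ≃ₗ[K] (V ⊗[K] (V ⊗[K] Tpow K V n)) from
      (TensorProduct.assoc K V (Tpow K V n) V).trans
        (TensorProduct.congr (LinearEquiv.refl K V) (eAux n))

lemma applyFirst_succ_apply (δ : V →ₗ[K] V ⊗[K] V) (n : ℕ) (v : V) (s : Tpow K V n) :
    applyFirst δ (n+1) (show Tpow K V (n+1) from v ⊗ₜ[K] s)
      = (TensorProduct.assoc K V V (Tpow K V n)) (δ v ⊗ₜ[K] s) := rfl

lemma eAux_succ_apply (n : ℕ) (v : V) (s : Tpow K V n) (w : V) :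
    eAux (n+1) ((show Tpow K V (n+1) from v ⊗ₜ[K] s) ⊗ₜ[K] w)
      = (show Tpow K V (n+2) from v ⊗ₜ[K] (eAux n (s ⊗ₜ[K] w))) := rfl

lemma keyE (n : ℕ) (u : V ⊗[K] V) (s : Tpow K V n) (w : V) :
    (TensorProduct.assoc K V V (Tpow K V (n+1))) (u ⊗ₜ[K] ((eAux n) (s ⊗ₜ[K] w)))
      = (eAux (n+2)) ((show Tpow K V (n+2) from
          (TensorProduct.assoc K V V (Tpow K V n)) (u ⊗ₜ[K] s)) ⊗ₜ[K] w) := by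
  induction u using TensorProduct.induction_on with
  | zero => simp [TensorProduct.zero_tmul]; erw [TensorProduct.zero_tmul, map_zero]; rfl
  | tmul a b =>
    rw [TensorProduct.assoc_tmul, TensorProduct.assoc_tmul]
    erw [eAux_succ_apply, eAux_succ_apply]; rfl
  | add a b ha hb =>
    rw [TensorProduct.add_tmul, TensorProduct.add_tmul, map_add, map_add]; erw [TensorProduct.add_tmul,
      map_add, ha, hb]; rfl

lemma stepE (δ : V →ₗ[K] V ⊗[K] V) : ∀ n, (applyFirst δ (n+1)).comp (eAux n).toLinearMap
    = (eAux (n+1)).toLinearMap.comp (LinearMap.rTensor V (applyFirst δ n))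
  | 0 => by
    apply TensorProduct.ext'
    intro x y
    show applyFirst δ 1 (eAux 0 (x ⊗ₜ y)) = eAux 1 (LinearMap.rTensor V (applyFirst δ 0) (x ⊗ₜ y))
    rw [LinearMap.rTensor_tmul]
    show (TensorProduct.assoc K V V V) (TensorProduct.map δ LinearMap.id (x ⊗ₜ y)) =
      eAux 1 ((show Tpow K V 1 from δ x) ⊗ₜ y)
    rw [show TensorProduct.map δ LinearMap.id ((x : V) ⊗ₜ[K] y) = δ x ⊗ₜ[K] y from TensorProduct.map_tmul δ LinearMap.id x y]
    generalize δ x = u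
    induction u using TensorProduct.induction_on with
    | zero => simp [TensorProduct.zero_tmul]; exact ((congrArg (eAux 1) (TensorProduct.zero_tmul _ y)).trans (map_zero _)).symm
    | tmul a b =>
      rw [TensorProduct.assoc_tmul]; erw [eAux_succ_apply]
      rfl
    | add a b ha hb =>
      simp only [TensorProduct.add_tmul, map_add]
      rw [ha, hb]
      exact (map_add _ _ _).symm.trans (congrArg _ (TensorProduct.add_tmul _ _ _).symm)
  | n + 1 => by
    apply TensorProduct.ext'
    intro t w
    induction t using TensorProduct.induction_on with
    | zero =>
      have key : ((applyFirst δ (n+2)).comp (eAux (n+1)).toLinearMap) ((0 : Tpow K V (n+1)) ⊗ₜ[K] w)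
          = ((eAux (n+2)).toLinearMap.comp (LinearMap.rTensor V (applyFirst δ (n+1))))
            ((0 : Tpow K V (n+1)) ⊗ₜ[K] w) := by
        rw [TensorProduct.zero_tmul, map_zero, map_zero]
      exact key
    | add a b ha hb =>
      have key : ∀ p q : Tpow K V (n+1),
          ((applyFirst δ (n+2)).comp (eAux (n+1)).toLinearMap) (p ⊗ₜ[K] w)
            = ((eAux (n+2)).toLinearMap.comp (LinearMap.rTensor V (applyFirst δ (n+1)))) (p ⊗ₜ[K] w) →
          ((applyFirst δ (n+2)).comp (eAux (n+1)).toLinearMap) (q ⊗ₜ[K] w)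
            = ((eAux (n+2)).toLinearMap.comp (LinearMap.rTensor V (applyFirst δ (n+1)))) (q ⊗ₜ[K] w) →
          ((applyFirst δ (n+2)).comp (eAux (n+1)).toLinearMap) ((p + q) ⊗ₜ[K] w)
            = ((eAux (n+2)).toLinearMap.comp (LinearMap.rTensor V (applyFirst δ (n+1)))) ((p + q) ⊗ₜ[K] w) := by
        intro p q h1 h2; rw [TensorProduct.add_tmul, map_add, map_add, h1, h2]
      exact key a b ha hb
    | tmul v s =>
      show applyFirst δ (n+2) (eAux (n+1) ((show Tpow K V (n+1) from v ⊗ₜ s) ⊗ₜ w))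
        = eAux (n+2) (LinearMap.rTensor V (applyFirst δ (n+1)) ((show Tpow K V (n+1) from v ⊗ₜ s) ⊗ₜ w))
      rw [eAux_succ_apply, LinearMap.rTensor_tmul, applyFirst_succ_apply, applyFirst_succ_apply]
      exact keyE n (δ v) s w


lemma iterD (δ : V →ₗ[K] V ⊗[K] V) : ∀ n, iterCo δ (n+1) =
    (eAux n).toLinearMap ∘ₗ (LinearMap.rTensor V (iterCo δ n)) ∘ₗ δ
  | 0 => by
    have h : iterCo δ 0 = (LinearMap.id : V →ₗ[K] V) := rfl
    rw [h]; erw [LinearMap.rTensor_id]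
    rfl
  | n + 1 => by
    show (applyFirst δ (n+1)).comp (iterCo δ (n+1)) = _
    calc (applyFirst δ (n+1)).comp (iterCo δ (n+1))
        = (applyFirst δ (n+1)).comp ((eAux n).toLinearMap ∘ₗ (LinearMap.rTensor V (iterCo δ n)) ∘ₗ δ) := by
          rw [iterD δ n]
      _ = ((applyFirst δ (n+1)).comp (eAux n).toLinearMap) ∘ₗ (LinearMap.rTensor V (iterCo δ n)) ∘ₗ δ := by
          rw [LinearMap.comp_assoc]
      _ = ((eAux (n+1)).toLinearMap.comp (LinearMap.rTensor V (applyFirst δ n)))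
            ∘ₗ (LinearMap.rTensor V (iterCo δ n)) ∘ₗ δ := by rw [stepE]
      _ = (eAux (n+1)).toLinearMap ∘ₗ (LinearMap.rTensor V ((applyFirst δ n).comp (iterCo δ n))) ∘ₗ δ := by
          rw [LinearMap.rTensor_comp, LinearMap.comp_assoc, LinearMap.comp_assoc]
      _ = _ := rfl

lemma mem_ker_succ (δ : V →ₗ[K] V ⊗[K] V) (n : ℕ) (x : V) :
    x ∈ LinearMap.ker (iterCo δ (n+1)) ↔ LinearMap.rTensor V (iterCo δ n) (δ x) = 0 := by
  rw [LinearMap.mem_ker, iterD]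
  simp [LinearMap.comp_apply, LinearEquiv.map_eq_zero_iff]

lemma ker_mono (δ : V →ₗ[K] V ⊗[K] V) {m n : ℕ} (h : m ≤ n) :
    LinearMap.ker (iterCo δ m) ≤ LinearMap.ker (iterCo δ n) := by
  induction h with
  | refl => exact le_rfl
  | @step k h ih =>
      refine ih.trans fun x hx => ?_
      have he : iterCo δ (k+1) x = applyFirst δ k (iterCo δ k x) := rfl
      rw [LinearMap.mem_ker] at hx ⊢
      rw [he, hx, map_zero]

lemma ker_rT {W : Type} [AddCommGroup W] [Module K W] (f : V →ₗ[K] W) :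
    LinearMap.ker (f.rTensor V) = LinearMap.range ((LinearMap.ker f).subtype.rTensor V) :=
  LinearMap.exact_iff.mp (Module.Flat.rTensor_exact V (LinearMap.exact_subtype_ker_map f))

/-- In a conilpotent Lie bialgebra `g` with canonical filtration
`g_k = ker δ^k`, the bracket satisfies `[g_i, g_j] ⊆ g_{i+j-1}`. -/
theorem bracket_respects_filtration
    {K : Type} [Field K] [CharZero K] {V : Type} [AddCommGroup V] [Module K V]
    (B : V →ₗ[K] V →ₗ[K] V) (δ : V →ₗ[K] V ⊗[K] V)
    (hBskew : ∀ x y : V, B x y = - B y x)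
    (hJac : ∀ x y z : V, B (B x y) z + B (B y z) x + B (B z x) y = 0)
    (hδskew : ∀ x : V, TensorProduct.comm K V V (δ x) = - δ x)
    (hcoJac : ∀ x : V, coJacMap δ x + cyc3 (coJacMap δ x) + cyc3 (cyc3 (coJacMap δ x)) = 0)
    (hcocycle : ∀ x y : V, δ (B x y) = adAct B x (δ y) - adAct B y (δ x))
    (hexh : ∀ x : V, ∃ n : ℕ, iterCo δ n x = 0)
    (hfd : ∀ n : ℕ, FiniteDimensional K (LinearMap.ker (iterCo δ n))) :
    ∀ (i j : ℕ) (x y : V), x ∈ LinearMap.ker (iterCo δ i) → y ∈ LinearMap.ker (iterCo δ j) →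
      B x y ∈ LinearMap.ker (iterCo δ (i + j - 1)) := by
  have hker0 : ∀ x : V, x ∈ LinearMap.ker (iterCo δ 0) → x = 0 := fun x hx => hx
  -- a term in the "first leg in ker (iterCo δ m)" submodule maps to zero
  have hkill : ∀ (m : ℕ) (t : V ⊗[K] V),
      t ∈ LinearMap.range ((LinearMap.ker (iterCo δ m)).subtype.rTensor V) →
      LinearMap.rTensor V (iterCo δ m) t = 0 := by
    intro m t ht
    obtain ⟨u, hu⟩ := ht
    rw [← hu, ← LinearMap.comp_apply, ← LinearMap.rTensor_comp]
    have hz : (iterCo δ m).comp (LinearMap.ker (iterCo δ m)).subtype = 0 := by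
      ext ⟨a, ha⟩; exact ha
    rw [hz, LinearMap.rTensor_zero, LinearMap.zero_apply]
  suffices main : ∀ (N i j : ℕ) (x y : V), i + j ≤ N →
      x ∈ LinearMap.ker (iterCo δ i) → y ∈ LinearMap.ker (iterCo δ j) →
      B x y ∈ LinearMap.ker (iterCo δ (i + j - 1)) by
    intro i j x y hx hy; exact main (i + j) i j x y le_rfl hx hy
  intro N
  induction N with
  | zero =>
    intro i j x y hij hx hy
    have hi : i = 0 := by omega
    subst hi
    rw [hker0 x hx]
    simp
  | succ N IH =>
    intro i j x y hij hx hy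
    cases i with
    | zero => rw [hker0 x hx]; simp
    | succ i' =>
      cases j with
      | zero => rw [hker0 y hy]; simp
      | succ j' =>
        set m := i' + j' with hm
        have hidx : i' + 1 + (j' + 1) - 1 = m + 1 := by omega
        rw [hidx, mem_ker_succ]
        apply hkill
        rw [hcocycle]
        apply sub_mem
        · -- adAct B x (δ y)
          have hy' : δ y ∈ LinearMap.range ((LinearMap.ker (iterCo δ j')).subtype.rTensor V) := by
            rw [← ker_rT]; exact (mem_ker_succ δ j' y).mp hy
          obtain ⟨u, hu⟩ := hy'
          rw [← hu]; clear hu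
          induction u using TensorProduct.induction_on with
          | zero => rw [map_zero, map_zero]; exact zero_mem _
          | add a b ha hb => rw [map_add, map_add]; exact add_mem ha hb
          | tmul a b =>
            rw [LinearMap.rTensor_tmul]
            simp only [Submodule.subtype_apply]
            have hsplit : adAct B x ((↑a : V) ⊗ₜ[K] b)
                = (B x ↑a) ⊗ₜ[K] b + (↑a : V) ⊗ₜ[K] (B x b) := by
              simp [adAct, TensorProduct.map_tmul]
            rw [hsplit]
            apply add_mem
            · have h1 : B x ↑a ∈ LinearMap.ker (iterCo δ m) := by
                have h := IH (i' + 1) j' x ↑a (by omega) hx a.2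
                have e : i' + 1 + j' - 1 = m := by omega
                rwa [e] at h
              exact ⟨⟨B x ↑a, h1⟩ ⊗ₜ[K] b, rfl⟩
            · have h2 : (↑a : V) ∈ LinearMap.ker (iterCo δ m) :=
                ker_mono δ (by omega : j' ≤ m) a.2
              exact ⟨⟨↑a, h2⟩ ⊗ₜ[K] (B x b), rfl⟩
        · -- adAct B y (δ x)
          have hx' : δ x ∈ LinearMap.range ((LinearMap.ker (iterCo δ i')).subtype.rTensor V) := by
            rw [← ker_rT]; exact (mem_ker_succ δ i' x).mp hx
          obtain ⟨u, hu⟩ := hx'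
          rw [← hu]; clear hu
          induction u using TensorProduct.induction_on with
          | zero => rw [map_zero, map_zero]; exact zero_mem _
          | add a b ha hb => rw [map_add, map_add]; exact add_mem ha hb
          | tmul a b =>
            rw [LinearMap.rTensor_tmul]
            simp only [Submodule.subtype_apply]
            have hsplit : adAct B y ((↑a : V) ⊗ₜ[K] b)
                = (B y ↑a) ⊗ₜ[K] b + (↑a : V) ⊗ₜ[K] (B y b) := by
              simp [adAct, TensorProduct.map_tmul]
            rw [hsplit]
            apply add_mem
            · have h1 : B y ↑a ∈ LinearMap.ker (iterCo δ m) := by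
                have h := IH (j' + 1) i' y ↑a (by omega) hy a.2
                have e : j' + 1 + i' - 1 = m := by omega
                rwa [e] at h
              exact ⟨⟨B y ↑a, h1⟩ ⊗ₜ[K] b, rfl⟩
            · have h2 : (↑a : V) ∈ LinearMap.ker (iterCo δ m) :=
                ker_mono δ (by omega : i' ≤ m) a.2
              exact ⟨⟨↑a, h2⟩ ⊗ₜ[K] (B y b), rfl⟩
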